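/- Fix α ∈ (0,1). With X(T) = T^{1/(log log T)^{2−α/2}} and σ₀(T) = 1/2 + 1/(log log T)^{1−α}, the quantity ∏_{p prime, p ≥ X(T)} (1 − p^{-2σ₀(T)})^{-1} · ∏_{p prime, p ≥ X(T)} (1 + 2(p^{2σ₀(T)}+1)/(p^{4σ₀(T)}(p^{2σ₀(T)}−1))) tends to 1 as the real number T tends to infinity. -/

import Mathlib

open Filter

/-- `X(T) = T^(1/(log log T)^(2-α/2))`. -/
noncomputable def Xfun (α T : ℝ) : ℝ := T ^ (1 / Real.log (Real.log T) ^ (2 - α / 2))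

/-- `σ₀(T) = 1/2 + 1/(log log T)^(1-α)`. -/
noncomputable def sigma0 (α T : ℝ) : ℝ := 1 / 2 + 1 / Real.log (Real.log T) ^ (1 - α)

section Auxiliary

open Real

private lemma term_bound' {s u : ℝ} (hs : 1 < s) (hu : 2 ≤ u) :
    u ^ (-s) ≤ ((u - 1) ^ (1 - s) - u ^ (1 - s)) / (s - 1) := by
  obtain ⟨c, hc, hceq⟩ := exists_hasDerivAt_eq_slope (fun x => x ^ (1 - s))
      (fun x => (1 - s) * x ^ (-s)) (by linarith : u - 1 < u)
      (fun x hx => by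
        have hx0 : x ≠ 0 := by
          have : (1:ℝ) ≤ x := le_trans (by linarith) hx.1
          linarith
        exact (Real.continuousAt_rpow_const x (1 - s) (Or.inl hx0)).continuousWithinAt)
      (fun x hx => by
        have hx0 : x ≠ 0 := by
          have : (1:ℝ) ≤ x := le_trans (by linarith) hx.1.le
          linarith
        have := Real.hasDerivAt_rpow_const (x := x) (p := 1 - s) (Or.inl hx0)
        convert this using 1
        ring_nf)
  have hc1 : (1:ℝ) ≤ c := by have := hc.1; linarith
  have hcu : c ≤ u := hc.2.le
  have hkey : u ^ (-s) ≤ c ^ (-s) :=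
    Real.rpow_le_rpow_of_nonpos (by linarith) hcu (by linarith)
  have hden : u - (u - 1) = 1 := by ring
  rw [hden, div_one] at hceq
  rw [le_div_iff₀ (by linarith : (0:ℝ) < s - 1)]
  nlinarith [hkey, hceq]

private lemma sum_Ico_rpow_le' {s : ℝ} (hs : 1 < s) {N : ℕ} (hN : 2 ≤ N) {M : ℕ} (hM : N ≤ M) :
    ∑ i ∈ Finset.Ico N M, ((i : ℝ)) ^ (-s)
      ≤ (((N : ℝ) - 1) ^ (1 - s) - ((M : ℝ) - 1) ^ (1 - s)) / (s - 1) := by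
  induction M, hM using Nat.le_induction with
  | base => simp
  | succ M hM ih =>
    rw [Finset.sum_Ico_succ_top hM]
    have hterm := term_bound' hs (show (2:ℝ) ≤ (M:ℝ) by exact_mod_cast hN.trans hM)
    have hcast : ((M + 1 : ℕ) : ℝ) - 1 = (M : ℝ) := by push_cast; ring
    rw [hcast]
    have h2 : (((N:ℝ) - 1) ^ (1 - s) - ((M:ℝ) - 1) ^ (1-s)) / (s-1)
        + (((M:ℝ) - 1) ^ (1-s) - (M:ℝ) ^ (1-s)) / (s-1)
        = (((N:ℝ) - 1) ^ (1 - s) - (M:ℝ) ^ (1-s)) / (s-1) := by ring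
    linarith

private lemma tsum_tail_rpow_le' {s : ℝ} (hs : 1 < s) {N : ℕ} (hN : 2 ≤ N) :
    ∑' n : ℕ, (if N ≤ n then (n : ℝ) ^ (-s) else 0) ≤ ((N : ℝ) - 1) ^ (1 - s) / (s - 1) := by
  have hNR : (1:ℝ) ≤ (N:ℝ) - 1 := by
    have : (2:ℝ) ≤ (N:ℝ) := by exact_mod_cast hN
    linarith
  apply Real.tsum_le_of_sum_range_le
  · intro n
    split_ifs <;> positivity
  · intro M
    rcases le_or_gt N M with h | h
    · have h1 : ∑ i ∈ Finset.range M, (if N ≤ i then (i:ℝ) ^ (-s) else 0)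
          = ∑ i ∈ Finset.Ico N M, (if N ≤ i then (i:ℝ) ^ (-s) else 0) := by
        refine (Finset.sum_subset (fun i hi => ?_) (fun i hi hni => ?_)).symm
        · simp only [Finset.mem_Ico, Finset.mem_range] at hi ⊢; omega
        · simp only [Finset.mem_Ico, Finset.mem_range, not_and, not_le] at hi hni
          rw [if_neg (by omega)]
      have h2 : ∑ i ∈ Finset.Ico N M, (if N ≤ i then (i:ℝ) ^ (-s) else 0)
          = ∑ i ∈ Finset.Ico N M, (i:ℝ) ^ (-s) :=
        Finset.sum_congr rfl fun i hi => if_pos (Finset.mem_Ico.mp hi).1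
      rw [h1, h2]
      refine le_trans (sum_Ico_rpow_le' hs hN h) ?_
      have h3 : (0:ℝ) ≤ ((M:ℝ) - 1) ^ (1 - s) := by
        apply Real.rpow_nonneg
        have : (N:ℝ) ≤ (M:ℝ) := by exact_mod_cast h
        linarith
      exact (div_le_div_iff_of_pos_right (by linarith)).mpr (by linarith)
    · have : ∑ i ∈ Finset.range M, (if N ≤ i then (i:ℝ) ^ (-s) else 0) = 0 :=
        Finset.sum_eq_zero fun i hi => if_neg (by simp only [Finset.mem_range] at hi; omega)
      rw [this]
      apply div_nonneg (Real.rpow_nonneg (by linarith) _) (by linarith)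

private lemma summable_primes_tail' {s X : ℝ} (hs : 1 < s) :
    Summable (fun p : Nat.Primes => if X ≤ ((p : ℕ) : ℝ) then ((p : ℕ) : ℝ) ^ (-s) else 0) := by
  refine Summable.of_nonneg_of_le (fun p => ?_) (fun p => ?_)
    (Nat.Primes.summable_rpow.mpr (by linarith : -s < -1))
  · split_ifs <;> positivity
  · split_ifs
    · exact le_rfl
    · positivity

private lemma tsum_primes_tail_le' {s X : ℝ} (hs : 1 < s) :
    ∑' p : Nat.Primes, (if X ≤ ((p : ℕ) : ℝ) then ((p : ℕ) : ℝ) ^ (-s) else 0)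
      ≤ (((max 2 ⌈X⌉₊ : ℕ) : ℝ) - 1) ^ (1 - s) / (s - 1) := by
  set N : ℕ := max 2 ⌈X⌉₊ with hNdef
  have hN : 2 ≤ N := le_max_left _ _
  have hsumg : Summable (fun n : ℕ => if N ≤ n then (n : ℝ) ^ (-s) else 0) := by
    refine Summable.of_nonneg_of_le (fun n => ?_) (fun n => ?_)
      ((Real.summable_nat_rpow).mpr (by linarith : -s < -1))
    · split_ifs <;> positivity
    · split_ifs
      · exact le_rfl
      · positivity
  refine le_trans ?_ (tsum_tail_rpow_le' hs hN)
  refine Summable.tsum_le_tsum_of_inj (fun p : Nat.Primes => (p : ℕ))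
    Nat.Primes.coe_nat_injective (fun n _ => ?_) (fun p => ?_)
    (summable_primes_tail' hs) hsumg
  · split_ifs <;> positivity
  · by_cases h : X ≤ ((p : ℕ) : ℝ)
    · rw [if_pos h, if_pos]
      refine max_le p.2.two_le (Nat.ceil_le.mpr h)
    · rw [if_neg h]
      split_ifs <;> positivity

private lemma factor1_bounds' {q s : ℝ} (hq : 2 ≤ q) (hs : 1 < s) :
    1 ≤ (1 - q ^ (-s))⁻¹ ∧ Real.log ((1 - q ^ (-s))⁻¹) ≤ 2 * q ^ (-s) := by
  have hq0 : (0:ℝ) < q := by linarith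
  have hA : 2 ≤ q ^ s := by
    calc (2:ℝ) ≤ q := hq
    _ = q ^ (1:ℝ) := (Real.rpow_one q).symm
    _ ≤ q ^ s := Real.rpow_le_rpow_of_exponent_le (by linarith) hs.le
  have hxeq : q ^ (-s) = (q ^ s)⁻¹ := Real.rpow_neg hq0.le s
  set x : ℝ := q ^ (-s) with hx
  have hx0 : 0 < x := Real.rpow_pos_of_pos hq0 _
  have hxhalf : x ≤ 1 / 2 := by
    rw [hxeq, inv_le_comm₀ (by linarith) (by norm_num)]
    linarith
  have h1x : (0:ℝ) < 1 - x := by linarith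
  have hinv1 : 1 ≤ (1 - x)⁻¹ := by
    rw [le_inv_comm₀ (by norm_num) h1x]
    linarith
  refine ⟨hinv1, ?_⟩
  have hlog := Real.log_le_sub_one_of_pos (show (0:ℝ) < (1 - x)⁻¹ by positivity)
  have hmul : (1 - x)⁻¹ * (1 - x) = 1 := inv_mul_cancel₀ (by linarith)
  nlinarith [hlog, hmul]

private lemma factor2_bounds' {q s : ℝ} (hq : 2 ≤ q) (hs : 1 < s) :
    0 ≤ 2 * (q ^ s + 1) / (q ^ (2 * s) * (q ^ s - 1)) ∧
    Real.log (1 + 2 * (q ^ s + 1) / (q ^ (2 * s) * (q ^ s - 1))) ≤ 8 * q ^ (-s) := by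
  have hq0 : (0:ℝ) < q := by linarith
  have hA : 2 ≤ q ^ s := by
    calc (2:ℝ) ≤ q := hq
    _ = q ^ (1:ℝ) := (Real.rpow_one q).symm
    _ ≤ q ^ s := Real.rpow_le_rpow_of_exponent_le (by linarith) hs.le
  set A : ℝ := q ^ s with hAdef
  have h2s : q ^ (2 * s) = A * A := by
    rw [two_mul, Real.rpow_add hq0]
  have hApos : (0:ℝ) < A := by linarith
  have hden : (0:ℝ) < A * A * (A - 1) := by nlinarith
  have hg0 : 0 ≤ 2 * (A + 1) / (q ^ (2*s) * (A - 1)) := by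
    rw [h2s]
    exact div_nonneg (by linarith) hden.le
  refine ⟨hg0, ?_⟩
  have hlog := Real.log_le_sub_one_of_pos
    (show (0:ℝ) < 1 + 2 * (A + 1) / (q ^ (2*s) * (A - 1)) by linarith [hg0])
  refine hlog.trans ?_
  have hneg : q ^ (-s) = A⁻¹ := Real.rpow_neg hq0.le s
  rw [hneg, h2s]
  have step : 2 * (A + 1) / (A * A * (A - 1)) ≤ 8 * A⁻¹ := by
    rw [div_le_iff₀ hden]
    have hAinv : A⁻¹ * A = 1 := inv_mul_cancel₀ (by positivity)
    nlinarith [hAinv]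
  linarith [step]

/-- The pair of tail Euler products, as a function of the cutoff `X` and of `σ`. -/
noncomputable def Fprod (X σ : ℝ) : ℝ :=
  (∏' p : Nat.Primes, if X ≤ ((p : ℕ) : ℝ) then
      (1 - ((p : ℕ) : ℝ) ^ (-(2 * σ)))⁻¹ else 1) *
  (∏' p : Nat.Primes, if X ≤ ((p : ℕ) : ℝ) then
      (1 + 2 * (((p : ℕ) : ℝ) ^ (2 * σ) + 1) /
        (((p : ℕ) : ℝ) ^ (4 * σ) * (((p : ℕ) : ℝ) ^ (2 * σ) - 1)))
    else 1)

private lemma prod_bound' {X σ : ℝ} (hσ : 1 < 2 * σ) :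
    1 ≤ Fprod X σ ∧
      Fprod X σ ≤ Real.exp (10 *
        ((((max 2 ⌈X⌉₊ : ℕ) : ℝ) - 1) ^ (1 - 2 * σ) / (2 * σ - 1))) := by
  set s : ℝ := 2 * σ with hsdef
  set f₁ : Nat.Primes → ℝ := fun p =>
    if X ≤ ((p : ℕ) : ℝ) then (1 - ((p : ℕ) : ℝ) ^ (-s))⁻¹ else 1 with hf₁
  set f₂ : Nat.Primes → ℝ := fun p =>
    if X ≤ ((p : ℕ) : ℝ) then
      (1 + 2 * (((p : ℕ) : ℝ) ^ s + 1) /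
        (((p : ℕ) : ℝ) ^ (2 * s) * (((p : ℕ) : ℝ) ^ s - 1))) else 1 with hf₂
  set w : Nat.Primes → ℝ := fun p =>
    if X ≤ ((p : ℕ) : ℝ) then ((p : ℕ) : ℝ) ^ (-s) else 0 with hw
  have hq2 : ∀ p : Nat.Primes, (2:ℝ) ≤ ((p : ℕ) : ℝ) := fun p => by
    exact_mod_cast p.2.two_le
  have h₁ : ∀ p, 1 ≤ f₁ p ∧ Real.log (f₁ p) ≤ 2 * w p := by
    intro p
    simp only [hf₁, hw]
    split_ifs with h
    · exact ⟨(factor1_bounds' (hq2 p) hσ).1,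
        by simpa using (factor1_bounds' (hq2 p) hσ).2⟩
    · simp
  have h₂ : ∀ p, 1 ≤ f₂ p ∧ Real.log (f₂ p) ≤ 8 * w p := by
    intro p
    simp only [hf₂, hw]
    split_ifs with h
    · refine ⟨by linarith [(factor2_bounds' (hq2 p) hσ).1], ?_⟩
      simpa using (factor2_bounds' (hq2 p) hσ).2
    · simp
  have hwsum : Summable w := summable_primes_tail' hσ
  have hlogsum₁ : Summable fun p => Real.log (f₁ p) :=
    Summable.of_nonneg_of_le (fun p => Real.log_nonneg (h₁ p).1)
      (fun p => (h₁ p).2) (hwsum.mul_left 2)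
  have hlogsum₂ : Summable fun p => Real.log (f₂ p) :=
    Summable.of_nonneg_of_le (fun p => Real.log_nonneg (h₂ p).1)
      (fun p => (h₂ p).2) (hwsum.mul_left 8)
  set S₁ := ∑' p, Real.log (f₁ p) with hS₁
  set S₂ := ∑' p, Real.log (f₂ p) with hS₂
  have hprod₁ : HasProd f₁ (Real.exp S₁) := by
    have h := hlogsum₁.hasSum.rexp
    have heq : Real.exp ∘ (fun p => Real.log (f₁ p)) = f₁ :=
      funext fun p => Real.exp_log (by linarith [(h₁ p).1])
    rwa [heq] at h
  have hprod₂ : HasProd f₂ (Real.exp S₂) := by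
    have h := hlogsum₂.hasSum.rexp
    have heq : Real.exp ∘ (fun p => Real.log (f₂ p)) = f₂ :=
      funext fun p => Real.exp_log (by linarith [(h₂ p).1])
    rwa [heq] at h
  have hF : Fprod X σ = Real.exp (S₁ + S₂) := by
    have e4 : ∀ p : Nat.Primes, ((p:ℕ):ℝ) ^ ((4:ℝ) * σ) = ((p:ℕ):ℝ) ^ (2 * s) := by
      intro p; rw [hsdef]; ring_nf
    have : Fprod X σ = (∏' p, f₁ p) * (∏' p, f₂ p) := by
      rw [Fprod, hf₁, hf₂]
      congr 1
      refine tprod_congr fun p => ?_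
      rw [e4 p]
    rw [this, hprod₁.tprod_eq, hprod₂.tprod_eq, Real.exp_add]
  have hS₁nonneg : 0 ≤ S₁ := tsum_nonneg fun p => Real.log_nonneg (h₁ p).1
  have hS₂nonneg : 0 ≤ S₂ := tsum_nonneg fun p => Real.log_nonneg (h₂ p).1
  have hW := tsum_primes_tail_le' (X := X) hσ
  have hS₁le : S₁ ≤ 2 * ∑' p, w p := by
    rw [← tsum_mul_left]
    exact Summable.tsum_le_tsum (fun p => (h₁ p).2) hlogsum₁ (hwsum.mul_left 2)
  have hS₂le : S₂ ≤ 8 * ∑' p, w p := by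
    rw [← tsum_mul_left]
    exact Summable.tsum_le_tsum (fun p => (h₂ p).2) hlogsum₂ (hwsum.mul_left 8)
  constructor
  · rw [hF]
    exact Real.one_le_exp (by linarith)
  · rw [hF]
    apply Real.exp_le_exp.mpr
    have : (10:ℝ) * ∑' p, w p ≤ 10 *
        ((((max 2 ⌈X⌉₊ : ℕ) : ℝ) - 1) ^ (1 - s) / (s - 1)) := by linarith
    linarith

end Auxiliary

private lemma tail_aux (α : ℝ) (hα : 0 < α) (hα' : α < 1) :
    Filter.Tendsto (fun T : ℝ => Fprod (Xfun α T) (sigma0 α T)) atTop (nhds 1) := by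
  have hL : Tendsto (fun T : ℝ => Real.log (Real.log T)) atTop atTop :=
    Real.tendsto_log_atTop.comp Real.tendsto_log_atTop
  have ev2' : ∀ᶠ x : ℝ in atTop, Real.log x ^ (4 - 3 * α / 2) ≤ x := by
    have hlo := isLittleO_log_rpow_rpow_atTop (s := (1:ℝ)) (4 - 3 * α / 2) one_pos
    filter_upwards [hlo.def one_pos, eventually_ge_atTop (1:ℝ)] with x hx hx1
    have hlx : 0 ≤ Real.log x := Real.log_nonneg hx1
    have h1 : Real.log x ^ (4 - 3 * α / 2) ≤ |Real.log x ^ (4 - 3 * α / 2)| := le_abs_self _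
    rw [Real.norm_eq_abs, Real.norm_eq_abs, Real.rpow_one, one_mul,
      abs_of_nonneg (by linarith : (0:ℝ) ≤ x)] at hx
    exact h1.trans hx
  have ev2 : ∀ᶠ T : ℝ in atTop,
      Real.log (Real.log T) ^ (4 - 3 * α / 2) ≤ Real.log T :=
    Real.tendsto_log_atTop.eventually ev2'
  have hGlim : Tendsto (fun T : ℝ => Real.exp (10 * Real.exp (2 - Real.log (Real.log T))))
      atTop (nhds 1) := by
    have h1 : Tendsto (fun T : ℝ => 2 - Real.log (Real.log T)) atTop atBot := by
      have hneg : Tendsto (fun T : ℝ => -Real.log (Real.log T)) atTop atBot :=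
        tendsto_neg_atTop_atBot.comp hL
      simpa [sub_eq_add_neg] using tendsto_atBot_add_const_left atTop (2:ℝ) hneg
    have h2 : Tendsto (fun T : ℝ => Real.exp (2 - Real.log (Real.log T))) atTop (nhds 0) :=
      Real.tendsto_exp_atBot.comp h1
    have h3 : Tendsto (fun T : ℝ => 10 * Real.exp (2 - Real.log (Real.log T)))
        atTop (nhds 0) := by
      simpa using h2.const_mul (10:ℝ)
    have h4 := (Real.continuous_exp.tendsto 0).comp h3
    simpa [Function.comp_def] using h4
  have hev : ∀ᶠ T : ℝ in atTop, 1 ≤ Fprod (Xfun α T) (sigma0 α T) ∧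
      Fprod (Xfun α T) (sigma0 α T) ≤
        Real.exp (10 * Real.exp (2 - Real.log (Real.log T))) := by
    filter_upwards [hL.eventually_ge_atTop 1, ev2, eventually_gt_atTop (0:ℝ)] with T hL1 hy hT0
    set L : ℝ := Real.log (Real.log T) with hLdef
    set y : ℝ := Real.log T with hydef
    have hLpos : (0:ℝ) < L := by linarith
    have hLa : 1 ≤ L ^ (1 - α) := by
      have := Real.rpow_le_rpow_of_exponent_le hL1 (by linarith : (0:ℝ) ≤ 1 - α)
      rwa [Real.rpow_zero] at this
    have hLapos : (0:ℝ) < L ^ (1 - α) := by linarith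
    have hs1 : 2 * sigma0 α T - 1 = 2 / L ^ (1 - α) := by
      rw [sigma0]; ring
    have hσ : 1 < 2 * sigma0 α T := by
      have h : 0 < 2 / L ^ (1 - α) := by positivity
      linarith
    refine ⟨(prod_bound' hσ).1, ?_⟩
    have hLb : (0:ℝ) < L ^ (2 - α / 2) := Real.rpow_pos_of_pos hLpos _
    have hy1 : (1:ℝ) ≤ y := by
      have : (1:ℝ) ≤ L ^ (4 - 3 * α / 2) := by
        have := Real.rpow_le_rpow_of_exponent_le hL1 (by linarith : (0:ℝ) ≤ 4 - 3 * α / 2)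
        rwa [Real.rpow_zero] at this
      linarith
    have hlogX : Real.log (Xfun α T) = y / L ^ (2 - α / 2) := by
      rw [Xfun, Real.log_rpow hT0]
      ring
    have hXpos : 0 < Xfun α T := Real.rpow_pos_of_pos hT0 _
    have hXlogge : L ≤ Real.log (Xfun α T) := by
      rw [hlogX, le_div_iff₀ hLb]
      calc L * L ^ (2 - α / 2) = L ^ ((1:ℝ) + (2 - α / 2)) := by
            rw [Real.rpow_add hLpos, Real.rpow_one]
        _ ≤ L ^ (4 - 3 * α / 2) :=
            Real.rpow_le_rpow_of_exponent_le hL1 (by linarith)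
        _ ≤ y := hy
    have hX2 : 2 ≤ Xfun α T := by
      have h2 : Real.log 2 ≤ L := by
        have := Real.log_le_sub_one_of_pos (by norm_num : (0:ℝ) < 2)
        linarith
      calc (2:ℝ) = Real.exp (Real.log 2) := (Real.exp_log (by norm_num)).symm
        _ ≤ Real.exp (Real.log (Xfun α T)) := Real.exp_le_exp.mpr (by linarith)
        _ = Xfun α T := Real.exp_log hXpos
    refine (prod_bound' hσ).2.trans ?_
    apply Real.exp_le_exp.mpr
    have hBle : (((max 2 ⌈Xfun α T⌉₊ : ℕ) : ℝ) - 1) ^ (1 - 2 * sigma0 α T) /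
        (2 * sigma0 α T - 1) ≤ Real.exp (2 - L) := by
      set s : ℝ := 2 * sigma0 α T with hsdef
      set X : ℝ := Xfun α T with hXdef
      set N : ℕ := max 2 ⌈X⌉₊ with hNdef
      have hNX : X / 2 ≤ (N:ℝ) - 1 := by
        have h1 : X ≤ ((⌈X⌉₊ : ℕ) : ℝ) := Nat.le_ceil X
        have h2 : ((⌈X⌉₊ : ℕ) : ℝ) ≤ (N:ℝ) := by
          exact_mod_cast Nat.cast_le.mpr (le_max_right 2 ⌈X⌉₊)
        linarith
      have hB1 : ((N:ℝ) - 1) ^ (1 - s) ≤ (X / 2) ^ (1 - s) :=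
        Real.rpow_le_rpow_of_nonpos (by linarith) hNX (by linarith)
      have hB2 : (X / 2) ^ (1 - s) = Real.exp (Real.log (X / 2) * (1 - s)) :=
        Real.rpow_def_of_pos (by linarith) _
      have hB3 : 1 / (s - 1) = L ^ (1 - α) / 2 := by
        rw [hs1, one_div_div]
      have hB4 : L ^ (1 - α) / 2 ≤ Real.exp L := by
        have h1 : L ^ (1 - α) ≤ L := by
          have := Real.rpow_le_rpow_of_exponent_le hL1 (by linarith : 1 - α ≤ (1:ℝ))
          rwa [Real.rpow_one] at this
        have h2 := Real.add_one_le_exp L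
        linarith
      have hs2 : s - 1 ≤ 2 := by
        rw [hs1]
        exact div_le_self (by norm_num) hLa
      have hlog2 : Real.log 2 ≤ 1 := by
        have := Real.log_le_sub_one_of_pos (by norm_num : (0:ℝ) < 2)
        linarith
      have hlogX2 : Real.log (X / 2) = Real.log X - Real.log 2 :=
        Real.log_div (by linarith) (by norm_num)
      have hkey : 2 * L ≤ Real.log X * (s - 1) := by
        rw [hlogX, hs1]
        have hLc : (0:ℝ) < L ^ (3 - 3 * α / 2) := Real.rpow_pos_of_pos hLpos _
        have heq : y / L ^ (2 - α / 2) * (2 / L ^ (1 - α))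
            = 2 * (y / L ^ (3 - 3 * α / 2)) := by
          rw [div_mul_div_comm, ← Real.rpow_add hLpos]
          rw [show (2 - α / 2) + (1 - α) = 3 - 3 * α / 2 by ring]
          ring
        rw [heq]
        have : L ≤ y / L ^ (3 - 3 * α / 2) := by
          rw [le_div_iff₀ hLc]
          calc L * L ^ (3 - 3 * α / 2) = L ^ ((1:ℝ) + (3 - 3 * α / 2)) := by
                rw [Real.rpow_add hLpos, Real.rpow_one]
            _ ≤ L ^ (4 - 3 * α / 2) :=
                Real.rpow_le_rpow_of_exponent_le hL1 (by linarith)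
            _ ≤ y := hy
        linarith
      have hexp : Real.log (X / 2) * (1 - s) + L ≤ 2 - L := by
        rw [hlogX2]
        nlinarith [hσ, hlog2, hkey, hs2]
      calc ((N:ℝ) - 1) ^ (1 - s) / (s - 1)
          = ((N:ℝ) - 1) ^ (1 - s) * (1 / (s - 1)) := by ring
        _ ≤ (X / 2) ^ (1 - s) * Real.exp L := by
            apply mul_le_mul hB1 (by rw [hB3]; exact hB4) ?_ ?_
            · rw [hB3]; positivity
            · positivity
        _ = Real.exp (Real.log (X / 2) * (1 - s) + L) := by
            rw [hB2, ← Real.exp_add]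
        _ ≤ Real.exp (2 - L) := Real.exp_le_exp.mpr hexp
    nlinarith [hBle]
  exact tendsto_of_tendsto_of_tendsto_of_le_of_le' tendsto_const_nhds hGlim
    (hev.mono fun T h => h.1) (hev.mono fun T h => h.2)

theorem tail_euler_products_tendsto_one (α : ℝ) (hα : 0 < α) (hα' : α < 1) :
    Tendsto (fun T : ℝ =>
        (∏' p : Nat.Primes, if Xfun α T ≤ ((p : ℕ) : ℝ) then
            (1 - ((p : ℕ) : ℝ) ^ (-(2 * sigma0 α T)))⁻¹ else 1) *
        (∏' p : Nat.Primes, if Xfun α T ≤ ((p : ℕ) : ℝ) then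
            (1 + 2 * (((p : ℕ) : ℝ) ^ (2 * sigma0 α T) + 1) /
              (((p : ℕ) : ℝ) ^ (4 * sigma0 α T) * (((p : ℕ) : ℝ) ^ (2 * sigma0 α T) - 1)))
          else 1))
      atTop (nhds 1) := by
  exact tail_aux α hα hα'
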